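/- Let μ be a probability measure on [n] and let x_1, …, x_{3z} be i.i.d. samples from μ. Let X = #{(i₁,i₂,i₃) : 0 < i₁ ≤ z < i₂ ≤ 2z < i₃ ≤ 3z, x_{i₁} = x_{i₂} = x_{i₃}}. Then E[X] = z³ ∑_{p=1}^n μ(p)³ and E[X²] ≤ z³ S + 3z⁴ S^{4/3} + 3z⁵ S^{5/3} + z⁶ S² where S = ∑_{p=1}^n μ(p)³. -/

import Mathlib

open MeasureTheory Finset

private def dd {n : ℕ} (x p : Fin n) : ℝ := if x = p then 1 else 0

private def ff {n : ℕ} (w : Fin n → ℝ) {m : ℕ} (a b : Fin m) (p q : Fin n) : ℝ :=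
  if a = b then (if p = q then w p else 0) else w p * w q

private def chi {n m : ℕ} (a1 a2 a3 b1 b2 b3 : Fin m) (p q : Fin n) (i : Fin m) (j : Fin n) : ℝ :=
  (if i = a1 then dd j p else 1) * ((if i = a2 then dd j p else 1) * ((if i = a3 then dd j p else 1) *
  ((if i = b1 then dd j q else 1) * ((if i = b2 then dd j q else 1) * (if i = b3 then dd j q else 1)))))

private lemma sumC {m n : ℕ} (g : Fin m → Fin n → ℝ) :
    ∑ ω : Fin m → Fin n, ∏ i, g i (ω i) = ∏ i, ∑ j, g i j := by
  rw [Finset.prod_univ_sum (fun _ => (univ : Finset (Fin n))) g, Fintype.piFinset_univ]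

private lemma sum_w_dd {n : ℕ} (w : Fin n → ℝ) (p : Fin n) : ∑ j, w j * dd j p = w p := by
  simp [dd, mul_ite, mul_one, mul_zero, Finset.sum_ite_eq']

private lemma sum_w_dd2 {n : ℕ} (w : Fin n → ℝ) (p q : Fin n) :
    ∑ j, w j * (dd j p * dd j q) = if p = q then w p else 0 := by
  have h : ∀ j, w j * (dd j p * dd j q) = if j = p then (if p = q then w p else 0) else 0 := by
    intro j
    by_cases hjp : j = p <;> by_cases hjq : j = q <;> subst_eqs <;>
      simp only [dd] <;> split_ifs <;> first | (exfalso; tauto) | norm_num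
  rw [Finset.sum_congr rfl (fun j _ => h j), Finset.sum_ite_eq' univ p]
  simp

private lemma triple_expand {n : ℕ} (x y u : Fin n) :
    (if x = y ∧ y = u then (1:ℝ) else 0) = ∑ p, dd x p * dd y p * dd u p := by
  have h : ∀ p : Fin n, dd x p * dd y p * dd u p
      = if p = x then (if x = y ∧ y = u then (1:ℝ) else 0) else 0 := by
    intro p
    by_cases hx : x = p <;> by_cases hy : y = p <;> by_cases hu : u = p <;>
      subst_eqs <;> simp only [dd] <;> split_ifs <;> first | (exfalso; tauto) | norm_num
  rw [Finset.sum_congr rfl (fun p _ => h p), Finset.sum_ite_eq' univ x]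
  simp

private lemma pair_sum {n z : ℕ} (w : Fin n → ℝ) (hw1 : ∑ p, w p = 1)
    (a1 a2 a3 b1 b2 b3 : Fin (3*z))
    (ha1 : (a1:ℕ) < z) (ha2 : z ≤ (a2:ℕ)) (ha2' : (a2:ℕ) < 2*z) (ha3 : 2*z ≤ (a3:ℕ))
    (hb1 : (b1:ℕ) < z) (hb2 : z ≤ (b2:ℕ)) (hb2' : (b2:ℕ) < 2*z) (hb3 : 2*z ≤ (b3:ℕ)) :
    ∑ ω : Fin (3*z) → Fin n, (∏ i, w (ω i)) *
      ((if ω a1 = ω a2 ∧ ω a2 = ω a3 then (1:ℝ) else 0) *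
       (if ω b1 = ω b2 ∧ ω b2 = ω b3 then (1:ℝ) else 0))
    = ∑ p, ∑ q, ff w a1 b1 p q * ff w a2 b2 p q * ff w a3 b3 p q := by
  have e12 : a1 ≠ a2 := Fin.ne_of_val_ne (by omega)
  have e13 : a1 ≠ a3 := Fin.ne_of_val_ne (by omega)
  have e23 : a2 ≠ a3 := Fin.ne_of_val_ne (by omega)
  have f12 : b1 ≠ b2 := Fin.ne_of_val_ne (by omega)
  have f13 : b1 ≠ b3 := Fin.ne_of_val_ne (by omega)
  have f23 : b2 ≠ b3 := Fin.ne_of_val_ne (by omega)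
  have c12 : a1 ≠ b2 := Fin.ne_of_val_ne (by omega)
  have c13 : a1 ≠ b3 := Fin.ne_of_val_ne (by omega)
  have c21 : a2 ≠ b1 := Fin.ne_of_val_ne (by omega)
  have c23 : a2 ≠ b3 := Fin.ne_of_val_ne (by omega)
  have c31 : a3 ≠ b1 := Fin.ne_of_val_ne (by omega)
  have c32 : a3 ≠ b2 := Fin.ne_of_val_ne (by omega)
  have key : ∀ (ω : Fin (3*z) → Fin n) (p q : Fin n),
      (∏ i, w (ω i)) *
        ((dd (ω a1) p * dd (ω a2) p * dd (ω a3) p) * (dd (ω b1) q * dd (ω b2) q * dd (ω b3) q))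
      = ∏ i, (w (ω i) * chi a1 a2 a3 b1 b2 b3 p q i (ω i)) := by
    intro ω p q
    rw [Finset.prod_mul_distrib]
    congr 1
    simp only [chi, Finset.prod_mul_distrib, Finset.prod_ite_eq', Finset.mem_univ, if_pos]
    ring
  have step1 : ∑ ω : Fin (3*z) → Fin n, (∏ i, w (ω i)) *
      ((if ω a1 = ω a2 ∧ ω a2 = ω a3 then (1:ℝ) else 0) *
       (if ω b1 = ω b2 ∧ ω b2 = ω b3 then (1:ℝ) else 0))
      = ∑ p, ∑ q, ∑ ω : Fin (3*z) → Fin n,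
          ∏ i, (w (ω i) * chi a1 a2 a3 b1 b2 b3 p q i (ω i)) := by
    have hsw : ∀ ω : Fin (3*z) → Fin n, (∏ i, w (ω i)) *
        ((if ω a1 = ω a2 ∧ ω a2 = ω a3 then (1:ℝ) else 0) *
         (if ω b1 = ω b2 ∧ ω b2 = ω b3 then (1:ℝ) else 0))
        = ∑ p, ∑ q, ∏ i, (w (ω i) * chi a1 a2 a3 b1 b2 b3 p q i (ω i)) := by
      intro ω
      rw [triple_expand (ω a1) (ω a2) (ω a3), triple_expand (ω b1) (ω b2) (ω b3),
        Finset.sum_mul_sum, Finset.mul_sum]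
      refine Finset.sum_congr rfl fun p _ => ?_
      rw [Finset.mul_sum]
      exact Finset.sum_congr rfl fun q _ => key ω p q
    rw [Finset.sum_congr rfl fun ω _ => hsw ω, Finset.sum_comm]
    exact Finset.sum_congr rfl fun p _ => Finset.sum_comm
  rw [step1]
  refine Finset.sum_congr rfl fun p _ => Finset.sum_congr rfl fun q _ => ?_
  rw [sumC (fun i j => w j * chi a1 a2 a3 b1 b2 b3 p q i j)]
  have gouter : ∀ i : Fin (3*z), i ≠ a1 → i ≠ a2 → i ≠ a3 → i ≠ b1 → i ≠ b2 → i ≠ b3 →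
      (∑ j, w j * chi a1 a2 a3 b1 b2 b3 p q i j) = 1 := by
    intro i h1 h2 h3 h4 h5 h6
    simp [chi, h1, h2, h3, h4, h5, h6, hw1]
  have d2 : Disjoint ({a2, b2} : Finset (Fin (3*z))) {a3, b3} := by
    simp only [Finset.disjoint_left, mem_insert, mem_singleton]
    rintro i (rfl | rfl) h <;> rcases h with rfl | rfl <;> omega
  have d1 : Disjoint ({a1, b1} : Finset (Fin (3*z))) ({a2, b2} ∪ {a3, b3}) := by
    simp only [Finset.disjoint_left, mem_union, mem_insert, mem_singleton]
    rintro i (rfl | rfl) h <;> rcases h with (rfl | rfl) | (rfl | rfl) <;> omega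
  have hsplit : (∏ i, ∑ j, w j * chi a1 a2 a3 b1 b2 b3 p q i j)
      = (∏ i ∈ ({a1, b1} : Finset (Fin (3*z))), ∑ j, w j * chi a1 a2 a3 b1 b2 b3 p q i j) *
        ((∏ i ∈ ({a2, b2} : Finset (Fin (3*z))), ∑ j, w j * chi a1 a2 a3 b1 b2 b3 p q i j) *
         (∏ i ∈ ({a3, b3} : Finset (Fin (3*z))), ∑ j, w j * chi a1 a2 a3 b1 b2 b3 p q i j)) := by
    rw [← Finset.prod_union d2, ← Finset.prod_union d1]
    refine (Finset.prod_subset (Finset.subset_univ _) fun i _ hi => ?_).symm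
    simp only [mem_union, mem_insert, mem_singleton] at hi
    push_neg at hi
    exact gouter i hi.1.1 hi.2.1.1 hi.2.2.1 hi.1.2 hi.2.1.2 hi.2.2.2
  rw [hsplit]
  have blk1 : (∏ i ∈ ({a1, b1} : Finset (Fin (3*z))), ∑ j, w j * chi a1 a2 a3 b1 b2 b3 p q i j)
      = ff w a1 b1 p q := by
    by_cases hab : a1 = b1
    · subst hab
      rw [show ({a1, a1} : Finset (Fin (3*z))) = {a1} by simp, Finset.prod_singleton]
      have hc : ∀ j, chi a1 a2 a3 a1 b2 b3 p q a1 j = dd j p * dd j q := by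
        intro j; simp [chi, e12, e13, c12, c13]
      simp only [hc, sum_w_dd2]
      simp [ff]
    · rw [Finset.prod_pair hab]
      have h1 : ∀ j, chi a1 a2 a3 b1 b2 b3 p q a1 j = dd j p := by
        intro j; simp [chi, e12, e13, hab, c12, c13]
      have h2 : ∀ j, chi a1 a2 a3 b1 b2 b3 p q b1 j = dd j q := by
        intro j; simp [chi, Ne.symm hab, c21.symm, c31.symm, f12, f13]
      simp only [h1, h2, sum_w_dd]
      simp [ff, hab]
  have blk2 : (∏ i ∈ ({a2, b2} : Finset (Fin (3*z))), ∑ j, w j * chi a1 a2 a3 b1 b2 b3 p q i j)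
      = ff w a2 b2 p q := by
    by_cases hab : a2 = b2
    · subst hab
      rw [show ({a2, a2} : Finset (Fin (3*z))) = {a2} by simp, Finset.prod_singleton]
      have hc : ∀ j, chi a1 a2 a3 b1 a2 b3 p q a2 j = dd j p * dd j q := by
        intro j; simp [chi, e12.symm, e23, c21, c23]
      simp only [hc, sum_w_dd2]
      simp [ff]
    · rw [Finset.prod_pair hab]
      have h1 : ∀ j, chi a1 a2 a3 b1 b2 b3 p q a2 j = dd j p := by
        intro j; simp [chi, e12.symm, e23, c21, hab, c23]
      have h2 : ∀ j, chi a1 a2 a3 b1 b2 b3 p q b2 j = dd j q := by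
        intro j; simp [chi, c12.symm, Ne.symm hab, c32.symm, f12.symm, f23]
      simp only [h1, h2, sum_w_dd]
      simp [ff, hab]
  have blk3 : (∏ i ∈ ({a3, b3} : Finset (Fin (3*z))), ∑ j, w j * chi a1 a2 a3 b1 b2 b3 p q i j)
      = ff w a3 b3 p q := by
    by_cases hab : a3 = b3
    · subst hab
      rw [show ({a3, a3} : Finset (Fin (3*z))) = {a3} by simp, Finset.prod_singleton]
      have hc : ∀ j, chi a1 a2 a3 b1 b2 a3 p q a3 j = dd j p * dd j q := by
        intro j; simp [chi, e13.symm, e23.symm, c31, c32]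
      simp only [hc, sum_w_dd2]
      simp [ff]
    · rw [Finset.prod_pair hab]
      have h1 : ∀ j, chi a1 a2 a3 b1 b2 b3 p q a3 j = dd j p := by
        intro j; simp [chi, e13.symm, e23.symm, c31, c32, hab]
      have h2 : ∀ j, chi a1 a2 a3 b1 b2 b3 p q b3 j = dd j q := by
        intro j; simp [chi, c13.symm, c23.symm, Ne.symm hab, f13.symm, f23.symm]
      simp only [h1, h2, sum_w_dd]
      simp [ff, hab]
  rw [blk1, blk2, blk3]
  ring

private lemma fact2 {α β : Type*} [DecidableEq α] [DecidableEq β] (B : Finset α) (C : Finset β)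
    (f : α → α → ℝ) (g : β → β → ℝ) :
    ∑ t ∈ B ×ˢ C, ∑ t' ∈ B ×ˢ C, f t.1 t'.1 * g t.2 t'.2
    = (∑ i ∈ B, ∑ j ∈ B, f i j) * (∑ u ∈ C, ∑ v ∈ C, g u v) := by
  calc ∑ t ∈ B ×ˢ C, ∑ t' ∈ B ×ˢ C, f t.1 t'.1 * g t.2 t'.2
      = ∑ i ∈ B, ∑ u ∈ C, ∑ j ∈ B, ∑ v ∈ C, f i j * g u v := by
        simp only [Finset.sum_product]
    _ = ∑ i ∈ B, ∑ j ∈ B, ∑ u ∈ C, ∑ v ∈ C, f i j * g u v := by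
        refine Finset.sum_congr rfl fun i _ => ?_
        exact Finset.sum_comm
    _ = (∑ i ∈ B, ∑ j ∈ B, f i j) * (∑ u ∈ C, ∑ v ∈ C, g u v) := by
        symm
        rw [Finset.sum_mul]
        refine Finset.sum_congr rfl fun i _ => ?_
        rw [Finset.sum_mul]
        refine Finset.sum_congr rfl fun j _ => ?_
        rw [Finset.mul_sum]
        refine Finset.sum_congr rfl fun u _ => ?_
        rw [Finset.mul_sum]

private lemma blocksum {n m : ℕ} (w : Fin n → ℝ) (B : Finset (Fin m)) (p q : Fin n) :
    ∑ i ∈ B, ∑ j ∈ B, ff w i j p q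
    = (B.card : ℝ) * (if p = q then w p else 0)
      + ((B.card : ℝ) * ((B.card : ℝ) - 1)) * (w p * w q) := by
  have hin : ∀ i ∈ B, ∑ j ∈ B, ff w i j p q
      = (if p = q then w p else 0) + ((B.card : ℝ) - 1) * (w p * w q) := by
    intro i hi
    have h : ∀ j, ff w i j p q
        = (if i = j then ((if p = q then w p else 0) - w p * w q) else 0) + w p * w q := by
      intro j; by_cases hij : i = j <;> simp [ff, hij]
    rw [Finset.sum_congr rfl fun j _ => h j, Finset.sum_add_distrib,
      Finset.sum_ite_eq B i, if_pos hi, Finset.sum_const, nsmul_eq_mul]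
    ring
  rw [Finset.sum_congr rfl hin, Finset.sum_const, nsmul_eq_mul]
  ring

theorem stmt_7 (n z : ℕ) (hn : 1 ≤ n) (hz : 1 ≤ z)
    (μ : Measure (Fin n)) [IsProbabilityMeasure μ]
    (P : Measure (Fin (3 * z) → Fin n)) (hP : P = Measure.pi fun _ => μ)
    (S : ℝ) (hS : S = ∑ p : Fin n, (μ {p}).toReal ^ 3)
    (X : (Fin (3 * z) → Fin n) → ℝ)
    (hX : ∀ ω, X ω =
      (Finset.univ.filter
        (fun t : Fin (3 * z) × Fin (3 * z) × Fin (3 * z) =>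
          (t.1 : ℕ) < z ∧ z ≤ (t.2.1 : ℕ) ∧ (t.2.1 : ℕ) < 2 * z ∧ 2 * z ≤ (t.2.2 : ℕ) ∧
            ω t.1 = ω t.2.1 ∧ ω t.2.1 = ω t.2.2)).card) :
    (∫ ω, X ω ∂P) = (z : ℝ) ^ 3 * S ∧
      (∫ ω, X ω ^ 2 ∂P) ≤
        (z : ℝ) ^ 3 * S + 3 * (z : ℝ) ^ 4 * S ^ ((4 : ℝ) / 3)
          + 3 * (z : ℝ) ^ 5 * S ^ ((5 : ℝ) / 3) + (z : ℝ) ^ 6 * S ^ 2 := by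
  subst hP
  set W : Fin n → ℝ := fun p => (μ {p}).toReal with hWdef
  have hW0 : ∀ p, 0 ≤ W p := fun p => ENNReal.toReal_nonneg
  have hw1 : ∑ p, W p = 1 := by
    have h : μ (⋃ p : Fin n, {p}) = ∑' p : Fin n, μ {p} :=
      measure_iUnion (fun i j hij => by simp [Set.disjoint_singleton, hij])
        (fun _ => measurableSet_singleton _)
    rw [Set.iUnion_of_singleton, measure_univ, tsum_fintype] at h
    have h2 := congrArg ENNReal.toReal h
    rw [ENNReal.toReal_sum (fun p _ => measure_ne_top μ _)] at h2
    simpa using h2.symm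
  have hint : ∀ f : (Fin (3 * z) → Fin n) → ℝ,
      ∫ ω, f ω ∂(Measure.pi fun _ : Fin (3 * z) => μ)
        = ∑ ω : Fin (3 * z) → Fin n, (∏ i, W (ω i)) * f ω := by
    intro f
    rw [integral_fintype Integrable.of_finite]
    refine Finset.sum_congr rfl fun ω _ => ?_
    rw [smul_eq_mul]
    congr 1
    rw [measureReal_def, ← Set.univ_pi_singleton ω, Measure.pi_pi, ENNReal.toReal_prod]
  set T : Finset (Fin (3 * z) × Fin (3 * z) × Fin (3 * z)) :=
    Finset.univ.filter (fun t : Fin (3 * z) × Fin (3 * z) × Fin (3 * z) =>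
      (t.1 : ℕ) < z ∧ z ≤ (t.2.1 : ℕ) ∧ (t.2.1 : ℕ) < 2 * z ∧ 2 * z ≤ (t.2.2 : ℕ)) with hTdef
  have hXsum : ∀ ω, X ω = ∑ t ∈ T,
      (if ω t.1 = ω t.2.1 ∧ ω t.2.1 = ω t.2.2 then (1:ℝ) else 0) := by
    intro ω
    rw [hX ω, hTdef, Finset.sum_filter, Finset.card_filter]
    push_cast
    refine Finset.sum_congr rfl fun t _ => ?_
    by_cases h : (t.1 : ℕ) < z ∧ z ≤ (t.2.1 : ℕ) ∧ (t.2.1 : ℕ) < 2 * z ∧ 2 * z ≤ (t.2.2 : ℕ)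
    · simp [h.1, h.2.1, h.2.2.1, h.2.2.2]
    · rw [if_neg (fun hc => h ⟨hc.1, hc.2.1, hc.2.2.1, hc.2.2.2.1⟩), if_neg h]
  have hmem : ∀ t ∈ T, (t.1 : ℕ) < z ∧ z ≤ (t.2.1 : ℕ) ∧ (t.2.1 : ℕ) < 2 * z ∧
      2 * z ≤ (t.2.2 : ℕ) := fun t ht => (Finset.mem_filter.mp ht).2
  -- blocks
  set B1 : Finset (Fin (3 * z)) := Finset.univ.filter (fun i : Fin (3*z) => (i:ℕ) < z) with hB1def
  set B2 : Finset (Fin (3 * z)) :=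
    Finset.univ.filter (fun i : Fin (3*z) => z ≤ (i:ℕ) ∧ (i:ℕ) < 2*z) with hB2def
  set B3 : Finset (Fin (3 * z)) := Finset.univ.filter (fun i : Fin (3*z) => 2*z ≤ (i:ℕ)) with hB3def
  have hT : T = B1 ×ˢ (B2 ×ˢ B3) := by
    ext t
    simp only [hTdef, hB1def, hB2def, hB3def, Finset.mem_filter, Finset.mem_univ, true_and,
      Finset.mem_product]
    tauto
  have hB1card : B1.card = z := by
    have h : B1.image Fin.val = Finset.range z := by
      ext j
      simp only [hB1def, Finset.mem_image, Finset.mem_filter, Finset.mem_univ, true_and,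
        Finset.mem_range]
      constructor
      · rintro ⟨i, hi, rfl⟩; exact hi
      · intro hj; exact ⟨⟨j, by omega⟩, hj, rfl⟩
    have h2 := Finset.card_image_of_injective B1 Fin.val_injective
    rw [h, Finset.card_range] at h2
    exact h2.symm
  have hB2card : B2.card = z := by
    have h : B2.image Fin.val = Finset.Ico z (2*z) := by
      ext j
      simp only [hB2def, Finset.mem_image, Finset.mem_filter, Finset.mem_univ, true_and,
        Finset.mem_Ico]
      constructor
      · rintro ⟨i, hi, rfl⟩; exact hi
      · intro hj; exact ⟨⟨j, by omega⟩, hj, rfl⟩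
    have h2 := Finset.card_image_of_injective B2 Fin.val_injective
    rw [h, Nat.card_Ico] at h2
    omega
  have hB3card : B3.card = z := by
    have h : B3.image Fin.val = Finset.Ico (2*z) (3*z) := by
      ext j
      simp only [hB3def, Finset.mem_image, Finset.mem_filter, Finset.mem_univ, true_and,
        Finset.mem_Ico]
      constructor
      · rintro ⟨i, hi, rfl⟩; exact ⟨hi, i.isLt⟩
      · intro hj; exact ⟨⟨j, by omega⟩, hj.1, rfl⟩
    have h2 := Finset.card_image_of_injective B3 Fin.val_injective
    rw [h, Nat.card_Ico] at h2
    omega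
  have hTcard : T.card = z ^ 3 := by
    rw [hT, Finset.card_product, Finset.card_product, hB1card, hB2card, hB3card]
    ring
  -- indicator square
  have hEE : ∀ (c : Prop) [Decidable c],
      (if c then (1:ℝ) else 0) = (if c then (1:ℝ) else 0) * (if c then (1:ℝ) else 0) := by
    intro c _; split <;> norm_num
  -- diagonal value
  have hdiag : ∀ t : Fin (3 * z) × Fin (3 * z) × Fin (3 * z),
      ∑ p, ∑ q, ff W t.1 t.1 p q * ff W t.2.1 t.2.1 p q * ff W t.2.2 t.2.2 p q = S := by
    intro t
    rw [hS]
    refine Finset.sum_congr rfl fun p _ => ?_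
    have h : ∀ q, ff W t.1 t.1 p q * ff W t.2.1 t.2.1 p q * ff W t.2.2 t.2.2 p q
        = if p = q then W p ^ 3 else 0 := by
      intro q
      by_cases hpq : p = q
      · subst hpq; simp [ff]; ring
      · simp [ff, hpq]
    rw [Finset.sum_congr rfl fun q _ => h q, Finset.sum_ite_eq univ p, if_pos (Finset.mem_univ p)]
  -- first moment
  have hfirst : (∫ ω, X ω ∂(Measure.pi fun _ : Fin (3 * z) => μ)) = (z:ℝ) ^ 3 * S := by
    rw [hint X]
    calc ∑ ω : Fin (3 * z) → Fin n, (∏ i, W (ω i)) * X ω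
        = ∑ ω : Fin (3 * z) → Fin n, ∑ t ∈ T, (∏ i, W (ω i)) *
            (if ω t.1 = ω t.2.1 ∧ ω t.2.1 = ω t.2.2 then (1:ℝ) else 0) := by
          refine Finset.sum_congr rfl fun ω _ => ?_
          rw [hXsum ω, Finset.mul_sum]
      _ = ∑ t ∈ T, ∑ ω : Fin (3 * z) → Fin n, (∏ i, W (ω i)) *
            (if ω t.1 = ω t.2.1 ∧ ω t.2.1 = ω t.2.2 then (1:ℝ) else 0) := Finset.sum_comm
      _ = ∑ t ∈ T, S := by
          refine Finset.sum_congr rfl fun t ht => ?_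
          obtain ⟨h1, h2, h3, h4⟩ := hmem t ht
          calc ∑ ω : Fin (3 * z) → Fin n, (∏ i, W (ω i)) *
                (if ω t.1 = ω t.2.1 ∧ ω t.2.1 = ω t.2.2 then (1:ℝ) else 0)
              = ∑ ω : Fin (3 * z) → Fin n, (∏ i, W (ω i)) *
                ((if ω t.1 = ω t.2.1 ∧ ω t.2.1 = ω t.2.2 then (1:ℝ) else 0) *
                 (if ω t.1 = ω t.2.1 ∧ ω t.2.1 = ω t.2.2 then (1:ℝ) else 0)) := by
                refine Finset.sum_congr rfl fun ω _ => ?_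
                rw [← hEE]
            _ = ∑ p, ∑ q, ff W t.1 t.1 p q * ff W t.2.1 t.2.1 p q * ff W t.2.2 t.2.2 p q :=
                pair_sum W hw1 t.1 t.2.1 t.2.2 t.1 t.2.1 t.2.2 h1 h2 h3 h4 h1 h2 h3 h4
            _ = S := hdiag t
      _ = (z:ℝ) ^ 3 * S := by
          rw [Finset.sum_const, hTcard, nsmul_eq_mul]
          push_cast
          ring
  refine ⟨hfirst, ?_⟩
  -- second moment
  have hsecond : (∫ ω, X ω ^ 2 ∂(Measure.pi fun _ : Fin (3 * z) => μ))
      = ∑ p, ∑ q, ((z:ℝ) * (if p = q then W p else 0) + ((z:ℝ) * ((z:ℝ) - 1)) * (W p * W q)) ^ 3 := by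
    rw [hint (fun ω => X ω ^ 2)]
    calc ∑ ω : Fin (3 * z) → Fin n, (∏ i, W (ω i)) * X ω ^ 2
        = ∑ ω : Fin (3 * z) → Fin n, ∑ t ∈ T, ∑ t' ∈ T, (∏ i, W (ω i)) *
            ((if ω t.1 = ω t.2.1 ∧ ω t.2.1 = ω t.2.2 then (1:ℝ) else 0) *
             (if ω t'.1 = ω t'.2.1 ∧ ω t'.2.1 = ω t'.2.2 then (1:ℝ) else 0)) := by
          refine Finset.sum_congr rfl fun ω _ => ?_
          rw [hXsum ω, sq, Finset.sum_mul_sum, Finset.mul_sum]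
          refine Finset.sum_congr rfl fun t _ => ?_
          rw [Finset.mul_sum]
      _ = ∑ t ∈ T, ∑ t' ∈ T, ∑ ω : Fin (3 * z) → Fin n, (∏ i, W (ω i)) *
            ((if ω t.1 = ω t.2.1 ∧ ω t.2.1 = ω t.2.2 then (1:ℝ) else 0) *
             (if ω t'.1 = ω t'.2.1 ∧ ω t'.2.1 = ω t'.2.2 then (1:ℝ) else 0)) := by
          rw [Finset.sum_comm]
          exact Finset.sum_congr rfl fun t _ => Finset.sum_comm
      _ = ∑ t ∈ T, ∑ t' ∈ T, ∑ p, ∑ q,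
            ff W t.1 t'.1 p q * ff W t.2.1 t'.2.1 p q * ff W t.2.2 t'.2.2 p q := by
          refine Finset.sum_congr rfl fun t ht => Finset.sum_congr rfl fun t' ht' => ?_
          obtain ⟨h1, h2, h3, h4⟩ := hmem t ht
          obtain ⟨h1', h2', h3', h4'⟩ := hmem t' ht'
          exact pair_sum W hw1 t.1 t.2.1 t.2.2 t'.1 t'.2.1 t'.2.2 h1 h2 h3 h4 h1' h2' h3' h4'
      _ = ∑ p, ∑ q, ∑ t ∈ T, ∑ t' ∈ T,
            ff W t.1 t'.1 p q * ff W t.2.1 t'.2.1 p q * ff W t.2.2 t'.2.2 p q := by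
          calc ∑ t ∈ T, ∑ t' ∈ T, ∑ p, ∑ q,
                ff W t.1 t'.1 p q * ff W t.2.1 t'.2.1 p q * ff W t.2.2 t'.2.2 p q
              = ∑ t ∈ T, ∑ p, ∑ q, ∑ t' ∈ T,
                ff W t.1 t'.1 p q * ff W t.2.1 t'.2.1 p q * ff W t.2.2 t'.2.2 p q := by
                refine Finset.sum_congr rfl fun t _ => ?_
                rw [Finset.sum_comm]
                exact Finset.sum_congr rfl fun p _ => Finset.sum_comm
            _ = ∑ p, ∑ q, ∑ t ∈ T, ∑ t' ∈ T,
                ff W t.1 t'.1 p q * ff W t.2.1 t'.2.1 p q * ff W t.2.2 t'.2.2 p q := by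
                rw [Finset.sum_comm]
                exact Finset.sum_congr rfl fun p _ => Finset.sum_comm
      _ = ∑ p, ∑ q, ((z:ℝ) * (if p = q then W p else 0)
            + ((z:ℝ) * ((z:ℝ) - 1)) * (W p * W q)) ^ 3 := by
          refine Finset.sum_congr rfl fun p _ => Finset.sum_congr rfl fun q _ => ?_
          rw [hT]
          calc ∑ t ∈ B1 ×ˢ (B2 ×ˢ B3), ∑ t' ∈ B1 ×ˢ (B2 ×ˢ B3),
                ff W t.1 t'.1 p q * ff W t.2.1 t'.2.1 p q * ff W t.2.2 t'.2.2 p q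
              = ∑ t ∈ B1 ×ˢ (B2 ×ˢ B3), ∑ t' ∈ B1 ×ˢ (B2 ×ˢ B3),
                ff W t.1 t'.1 p q * (ff W t.2.1 t'.2.1 p q * ff W t.2.2 t'.2.2 p q) := by
                simp only [mul_assoc]
            _ = (∑ i ∈ B1, ∑ j ∈ B1, ff W i j p q) *
                ((∑ i ∈ B2, ∑ j ∈ B2, ff W i j p q) * (∑ i ∈ B3, ∑ j ∈ B3, ff W i j p q)) := by
                rw [fact2 B1 (B2 ×ˢ B3) (fun i j => ff W i j p q)
                    (fun u v => ff W u.1 v.1 p q * ff W u.2 v.2 p q),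
                  fact2 B2 B3 (fun i j => ff W i j p q) (fun u v => ff W u v p q)]
            _ = ((z:ℝ) * (if p = q then W p else 0) + ((z:ℝ) * ((z:ℝ) - 1)) * (W p * W q)) ^ 3 := by
                rw [blocksum W B1 p q, blocksum W B2 p q, blocksum W B3 p q,
                  hB1card, hB2card, hB3card]
                ring
  -- analytic bounds
  have hS0 : 0 ≤ S := hS ▸ Finset.sum_nonneg fun p _ => pow_nonneg (hW0 p) 3
  have hWle : ∀ p, W p ^ 3 ≤ S := fun p =>
    hS ▸ Finset.single_le_sum (fun i _ => pow_nonneg (hW0 i) 3) (Finset.mem_univ p)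
  have hSpos : 0 < S := by
    obtain ⟨p0, hp0⟩ : ∃ p, 0 < W p := by
      by_contra h
      push_neg at h
      rw [Finset.sum_eq_zero (fun p _ => le_antisymm (h p) (hW0 p))] at hw1
      norm_num at hw1
    exact lt_of_lt_of_le (pow_pos hp0 3) (hWle p0)
  have hw13 : ∀ p, W p ≤ S ^ ((1:ℝ)/3) := by
    intro p
    have h1 : W p = (W p ^ (3:ℕ) : ℝ) ^ ((1:ℝ)/3) := by
      rw [← Real.rpow_natCast (W p) 3, ← Real.rpow_mul (hW0 p)]
      norm_num
    rw [h1]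
    exact Real.rpow_le_rpow (pow_nonneg (hW0 p) 3) (hWle p) (by norm_num)
  have hw23 : ∀ p, W p ^ 2 ≤ S ^ ((2:ℝ)/3) := by
    intro p
    have h1 : (W p ^ (2:ℕ) : ℝ) = (W p ^ (3:ℕ) : ℝ) ^ ((2:ℝ)/3) := by
      rw [← Real.rpow_natCast (W p) 3, ← Real.rpow_mul (hW0 p), ← Real.rpow_natCast (W p) 2]
      norm_num
    rw [h1]
    exact Real.rpow_le_rpow (pow_nonneg (hW0 p) 3) (hWle p) (by norm_num)
  have h4 : ∑ p, W p ^ 4 ≤ S ^ ((4:ℝ)/3) := by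
    calc ∑ p, W p ^ 4 ≤ ∑ p, W p ^ 3 * S ^ ((1:ℝ)/3) := by
          refine Finset.sum_le_sum fun p _ => ?_
          calc W p ^ 4 = W p ^ 3 * W p := by ring
            _ ≤ W p ^ 3 * S ^ ((1:ℝ)/3) :=
                mul_le_mul_of_nonneg_left (hw13 p) (pow_nonneg (hW0 p) 3)
      _ = S * S ^ ((1:ℝ)/3) := by rw [← Finset.sum_mul, ← hS]
      _ = S ^ ((4:ℝ)/3) := by
          rw [show (4:ℝ)/3 = 1 + 1/3 by norm_num, Real.rpow_add hSpos, Real.rpow_one]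
  have h5 : ∑ p, W p ^ 5 ≤ S ^ ((5:ℝ)/3) := by
    calc ∑ p, W p ^ 5 ≤ ∑ p, W p ^ 3 * S ^ ((2:ℝ)/3) := by
          refine Finset.sum_le_sum fun p _ => ?_
          calc W p ^ 5 = W p ^ 3 * W p ^ 2 := by ring
            _ ≤ W p ^ 3 * S ^ ((2:ℝ)/3) :=
                mul_le_mul_of_nonneg_left (hw23 p) (pow_nonneg (hW0 p) 3)
      _ = S * S ^ ((2:ℝ)/3) := by rw [← Finset.sum_mul, ← hS]
      _ = S ^ ((5:ℝ)/3) := by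
          rw [show (5:ℝ)/3 = 1 + 2/3 by norm_num, Real.rpow_add hSpos, Real.rpow_one]
  -- bound the main sum
  have hzR : (1:ℝ) ≤ (z:ℝ) := by exact_mod_cast hz
  have hfinal : ∑ p, ∑ q, ((z:ℝ) * (if p = q then W p else 0) + (z:ℝ)^2 * (W p * W q)) ^ 3
      = (z:ℝ)^3 * S + 3*(z:ℝ)^4 * (∑ p, W p ^ 4) + 3*(z:ℝ)^5 * (∑ p, W p ^ 5)
        + (z:ℝ)^6 * S^2 := by
    have hper : ∀ p, ∑ q, ((z:ℝ) * (if p = q then W p else 0) + (z:ℝ)^2 * (W p * W q)) ^ 3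
        = (z:ℝ)^3 * W p ^ 3 + 3*(z:ℝ)^4 * W p ^ 4 + 3*(z:ℝ)^5 * W p ^ 5
          + ((z:ℝ)^6 * S) * W p ^ 3 := by
      intro p
      rw [← Finset.add_sum_erase _ _ (Finset.mem_univ p)]
      have h2 : ∀ q ∈ Finset.univ.erase p,
          ((z:ℝ) * (if p = q then W p else 0) + (z:ℝ)^2 * (W p * W q)) ^ 3
          = ((z:ℝ)^6 * W p ^ 3) * W q ^ 3 := by
        intro q hq
        have hne : p ≠ q := fun h => (Finset.mem_erase.mp hq).1 h.symm
        rw [if_neg hne]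
        ring
      rw [Finset.sum_congr rfl h2, ← Finset.mul_sum,
        Finset.sum_erase_eq_sub (Finset.mem_univ p), ← hS, if_pos rfl]
      ring
    rw [Finset.sum_congr rfl fun p _ => hper p, Finset.sum_add_distrib, Finset.sum_add_distrib,
      Finset.sum_add_distrib, ← Finset.mul_sum, ← Finset.mul_sum, ← Finset.mul_sum,
      ← Finset.mul_sum, ← hS]
    ring
  rw [hsecond]
  calc ∑ p, ∑ q, ((z:ℝ) * (if p = q then W p else 0) + ((z:ℝ) * ((z:ℝ) - 1)) * (W p * W q)) ^ 3
      ≤ ∑ p, ∑ q, ((z:ℝ) * (if p = q then W p else 0) + (z:ℝ)^2 * (W p * W q)) ^ 3 := by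
        refine Finset.sum_le_sum fun p _ => Finset.sum_le_sum fun q _ => ?_
        have hA : 0 ≤ (if p = q then W p else 0) := by split <;> simp [hW0]
        have hB : 0 ≤ W p * W q := mul_nonneg (hW0 p) (hW0 q)
        have hz0 : (0:ℝ) ≤ (z:ℝ) := by positivity
        have hz1 : (0:ℝ) ≤ (z:ℝ) - 1 := by linarith
        have hv0 : 0 ≤ (z:ℝ) * (if p = q then W p else 0) + ((z:ℝ) * ((z:ℝ) - 1)) * (W p * W q) :=
          add_nonneg (mul_nonneg hz0 hA) (mul_nonneg (mul_nonneg hz0 hz1) hB)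
        have hvV : (z:ℝ) * (if p = q then W p else 0) + ((z:ℝ) * ((z:ℝ) - 1)) * (W p * W q)
            ≤ (z:ℝ) * (if p = q then W p else 0) + (z:ℝ)^2 * (W p * W q) := by
          have hmm : (z:ℝ) * ((z:ℝ) - 1) ≤ (z:ℝ)^2 := by nlinarith
          exact add_le_add_right (mul_le_mul_of_nonneg_right hmm hB) _
        exact pow_le_pow_left₀ hv0 hvV 3
    _ = (z:ℝ)^3 * S + 3*(z:ℝ)^4 * (∑ p, W p ^ 4) + 3*(z:ℝ)^5 * (∑ p, W p ^ 5)
        + (z:ℝ)^6 * S^2 := hfinal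
    _ ≤ (z : ℝ) ^ 3 * S + 3 * (z : ℝ) ^ 4 * S ^ ((4 : ℝ) / 3)
          + 3 * (z : ℝ) ^ 5 * S ^ ((5 : ℝ) / 3) + (z : ℝ) ^ 6 * S ^ 2 := by
        have c4 : 3*(z:ℝ)^4 * (∑ p, W p ^ 4) ≤ 3 * (z:ℝ)^4 * S ^ ((4:ℝ)/3) :=
          mul_le_mul_of_nonneg_left h4 (by positivity)
        have c5 : 3*(z:ℝ)^5 * (∑ p, W p ^ 5) ≤ 3 * (z:ℝ)^5 * S ^ ((5:ℝ)/3) :=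
          mul_le_mul_of_nonneg_left h5 (by positivity)
        linarith
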